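/- Let f : M → M be a C¹ map of a compact Riemannian manifold M with Lebesgue (volume) measure Leb, eventually volume expanding with constant λ > 0, and let h(x) = min{n > 0 : |det Df^n(x)| ≥ e^{λn}}, Γ_n = {x : h(x) ≥ n}. If there exist constants C > 0 and α > 2 such that Leb(Γ_n) ≤ C·n^{−α} for every n ≥ 1, then there exists β > 0 such that for Lebesgue almost every x ∈ M there is C_x > 0 with |det Df^n(y)| > C_x · n^{β} for every n ≥ 1 and every y ∈ f^{−n}(x). -/

import Mathlib

open MeasureTheory Set Filter Function Real ENNReal

/-- `|det Df^n(x)|`: the absolute value of the Jacobian determinant of the `n`-th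
iterate of `f` at `x`. -/
noncomputable def absDetIter {d : ℕ}
    (f : EuclideanSpace ℝ (Fin d) → EuclideanSpace ℝ (Fin d)) (n : ℕ)
    (x : EuclideanSpace ℝ (Fin d)) : ℝ :=
  |(fderiv ℝ (f^[n]) x).det|

/-- `h(x) = min {n > 0 : |det Df^n(x)| ≥ e^{λ n}}`, with value `∞` if no such `n` exists. -/
noncomputable def firstExpTime {d : ℕ}
    (f : EuclideanSpace ℝ (Fin d) → EuclideanSpace ℝ (Fin d)) (lam : ℝ)
    (x : EuclideanSpace ℝ (Fin d)) : ℕ∞ :=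
  sInf {N : ℕ∞ | ∃ m : ℕ, (m : ℕ∞) = N ∧ 0 < m ∧ Real.exp (lam * m) ≤ absDetIter f m x}

/-- `Γ_n = {x ∈ M : h(x) ≥ n}`. -/
noncomputable def GammaSet {d : ℕ} (M : Set (EuclideanSpace ℝ (Fin d)))
    (f : EuclideanSpace ℝ (Fin d) → EuclideanSpace ℝ (Fin d)) (lam : ℝ) (n : ℕ) :
    Set (EuclideanSpace ℝ (Fin d)) :=
  {x ∈ M | (n : ℕ∞) ≤ firstExpTime f lam x}

section Aux

variable {d : ℕ} {f : EuclideanSpace ℝ (Fin d) → EuclideanSpace ℝ (Fin d)} {lam : ℝ}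

lemma contDiff_iterate (hf : ContDiff ℝ 1 f) (n : ℕ) : ContDiff ℝ 1 (f^[n]) := by
  induction n with
  | zero => simpa using contDiff_id
  | succ n ih => rw [Function.iterate_succ']; exact hf.comp ih

lemma absDetIter_nonneg (n : ℕ) (x : EuclideanSpace ℝ (Fin d)) : 0 ≤ absDetIter f n x :=
  abs_nonneg _

lemma absDetIter_add (hf : ContDiff ℝ 1 f) (m k : ℕ) (y : EuclideanSpace ℝ (Fin d)) :
    absDetIter f (m + k) y = absDetIter f k (f^[m] y) * absDetIter f m y := by
  have h1 : DifferentiableAt ℝ (f^[k]) (f^[m] y) :=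
    ((contDiff_iterate hf k).differentiable one_ne_zero).differentiableAt
  have h2 : DifferentiableAt ℝ (f^[m]) y :=
    ((contDiff_iterate hf m).differentiable one_ne_zero).differentiableAt
  have hc : f^[m + k] = f^[k] ∘ f^[m] := by rw [add_comm, Function.iterate_add]
  simp only [absDetIter, hc, fderiv_comp y h1 h2]
  rw [show ((fderiv ℝ f^[k] (f^[m] y)).comp (fderiv ℝ f^[m] y)).det
      = (fderiv ℝ f^[k] (f^[m] y)).det * (fderiv ℝ f^[m] y).det from ?_, abs_mul]
  rw [ContinuousLinearMap.det, ContinuousLinearMap.toLinearMap_comp, LinearMap.det_comp]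

lemma continuous_absDetIter (hf : ContDiff ℝ 1 f) (n : ℕ) :
    Continuous (absDetIter f n) :=
  continuous_abs.comp (ContinuousLinearMap.continuous_det.comp
    ((contDiff_iterate hf n).continuous_fderiv one_ne_zero))

lemma le_firstExpTime_iff {x : EuclideanSpace ℝ (Fin d)} {n : ℕ} :
    (n : ℕ∞) ≤ firstExpTime f lam x ↔
      ∀ m : ℕ, 0 < m → m < n → absDetIter f m x < Real.exp (lam * m) := by
  constructor
  · intro h m hm hmn
    by_contra hcon
    push_neg at hcon
    have hmem : (m : ℕ∞) ∈ {N : ℕ∞ | ∃ m' : ℕ, (m' : ℕ∞) = N ∧ 0 < m' ∧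
        Real.exp (lam * m') ≤ absDetIter f m' x} := ⟨m, rfl, hm, hcon⟩
    have h1 : firstExpTime f lam x ≤ (m : ℕ∞) := sInf_le hmem
    have h2 : (n : ℕ∞) ≤ (m : ℕ∞) := h.trans h1
    exact absurd (Nat.cast_le.mp h2) (not_le.mpr hmn)
  · intro h
    refine le_sInf fun b hb => ?_
    obtain ⟨m, rfl, hm, hcond⟩ := hb
    rcases lt_or_ge m n with hlt | hle
    · exact absurd hcond (not_le.mpr (h m hm hlt))
    · exact_mod_cast hle

lemma measurableSet_gammaSet {M : Set (EuclideanSpace ℝ (Fin d))} (hM : IsClosed M)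
    (hf : ContDiff ℝ 1 f) (lam : ℝ) (n : ℕ) :
    MeasurableSet (GammaSet M f lam n) := by
  have hrw : GammaSet M f lam n = M ∩ ⋂ m ∈ Finset.Ico 1 n,
      {x | absDetIter f m x < Real.exp (lam * m)} := by
    ext x
    simp only [GammaSet, mem_setOf_eq, mem_inter_iff, mem_iInter, Finset.mem_Ico,
      le_firstExpTime_iff]
    exact and_congr_right fun _ =>
      ⟨fun h m hm => h m hm.1 hm.2, fun h m h1 h2 => h m ⟨h1, h2⟩⟩
  rw [hrw]
  refine hM.measurableSet.inter (MeasurableSet.biInter (Finset.Ico 1 n).countable_toSet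
    fun m _ => ?_)
  exact (isOpen_lt (continuous_absDetIter hf m) continuous_const).measurableSet

lemma decomp (hf : ContDiff ℝ 1 f) {M : Set (EuclideanSpace ℝ (Fin d))}
    (hfM : MapsTo f M M) (n : ℕ) (y : EuclideanSpace ℝ (Fin d)) (hy : y ∈ M) :
    ∃ r ≤ n, ((r : ℕ∞) + 1 ≤ firstExpTime f lam (f^[n - r] y)) ∧
      Real.exp (lam * ((n - r : ℕ) : ℝ)) * absDetIter f r (f^[n - r] y)
        ≤ absDetIter f n y := by
  induction n using Nat.strong_induction_on generalizing y with
  | _ n ih =>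
  by_cases hcase : ∀ m : ℕ, 0 < m → m ≤ n → absDetIter f m y < Real.exp (lam * m)
  · refine ⟨n, le_rfl, ?_, ?_⟩
    · have h1 : ((n + 1 : ℕ) : ℕ∞) ≤ firstExpTime f lam (f^[n - n] y) := by
        rw [Nat.sub_self, le_firstExpTime_iff]
        intro m hm hmn
        exact hcase m hm (by omega)
      simpa [Nat.cast_add] using h1
    · simp [Nat.sub_self]
  · push_neg at hcase
    obtain ⟨m, hm0, hmn, hcond⟩ := hcase
    have hym : f^[m] y ∈ M := hfM.iterate m hy
    obtain ⟨r, hr, hΓ, hbound⟩ := ih (n - m) (by omega) (f^[m] y) hym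
    have hco : f^[n - m - r] (f^[m] y) = f^[n - r] y := by
      rw [← Function.iterate_add_apply]
      congr 1
      omega
    refine ⟨r, by omega, ?_, ?_⟩
    · rwa [hco] at hΓ
    · have hsplit : absDetIter f n y
          = absDetIter f (n - m) (f^[m] y) * absDetIter f m y := by
        rw [← absDetIter_add hf m (n - m) y]
        congr 1
        omega
      rw [hco] at hbound
      have hexp : Real.exp (lam * ((n - r : ℕ) : ℝ))
          = Real.exp (lam * ((n - m - r : ℕ) : ℝ)) * Real.exp (lam * (m : ℝ)) := by
        rw [← Real.exp_add]
        congr 1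
        have h2 : ((n - r : ℕ) : ℝ) = ((n - m - r : ℕ) : ℝ) + (m : ℝ) := by
          have h3 : (n - r : ℕ) = (n - m - r : ℕ) + m := by omega
          exact_mod_cast h3
        rw [h2]; ring
      rw [hsplit, hexp]
      calc Real.exp (lam * ((n - m - r : ℕ) : ℝ)) * Real.exp (lam * (m : ℝ))
            * absDetIter f r (f^[n - r] y)
          = (Real.exp (lam * ((n - m - r : ℕ) : ℝ)) * absDetIter f r (f^[n - r] y))
            * Real.exp (lam * (m : ℝ)) := by ring
        _ ≤ absDetIter f (n - m) (f^[m] y) * absDetIter f m y :=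
            mul_le_mul hbound hcond (Real.exp_pos _).le (absDetIter_nonneg _ _)

lemma image_volume_le (hf : ContDiff ℝ 1 f) (r : ℕ)
    {s : Set (EuclideanSpace ℝ (Fin d))} (hs : MeasurableSet s) {T : ℝ}
    (hbound : ∀ z ∈ s, absDetIter f r z ≤ T) :
    volume (f^[r] '' s) ≤ ENNReal.ofReal T * volume s := by
  calc volume (f^[r] '' s)
      ≤ ∫⁻ z in s, ENNReal.ofReal |(fderiv ℝ (f^[r]) z).det| ∂volume := by
        apply addHaar_image_le_lintegral_abs_det_fderiv volume hs
        intro z _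
        exact (((contDiff_iterate hf r).differentiable one_ne_zero)
          z).hasFDerivAt.hasFDerivWithinAt
    _ ≤ ∫⁻ _ in s, ENNReal.ofReal T ∂volume := by
        apply setLIntegral_mono measurable_const
        intro z hz
        exact ENNReal.ofReal_le_ofReal (hbound z hz)
    _ = ENNReal.ofReal T * volume s := setLIntegral_const s _

lemma real_term_bound {C D α β : ℝ} (hC : 0 < C)
    (hD : ∀ j : ℕ, ((j : ℝ) + 1) ^ α * Real.exp (-(lam * j)) ≤ D)
    (hα : 0 < α) (hβ : 0 ≤ β) {n r : ℕ} (hr : r ≤ n) :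
    ((n : ℝ) ^ β * (Real.exp (lam * ((n - r : ℕ) : ℝ)))⁻¹)
        * (C * (((r + 1 : ℕ) : ℝ)) ^ (-α))
      ≤ C * D * (((n : ℝ) + 1) ^ (β - α)) := by
  set j : ℕ := n - r with hj
  have hx : (0 : ℝ) < (n : ℝ) + 1 := by positivity
  have hb : (0 : ℝ) < (r : ℝ) + 1 := by positivity
  have hjp : (0 : ℝ) < (j : ℝ) + 1 := by positivity
  have hrj : (r : ℝ) + (j : ℝ) = (n : ℝ) := by
    have h : r + j = n := by omega
    exact_mod_cast h
  have hfac : ((n : ℝ) + 1) ≤ ((r : ℝ) + 1) * ((j : ℝ) + 1) := by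
    nlinarith [mul_nonneg (by positivity : (0:ℝ) ≤ (r:ℝ)) (by positivity : (0:ℝ) ≤ (j:ℝ)), hrj]
  have hD0 : (0 : ℝ) < D := lt_of_lt_of_le (by positivity) (hD 0)
  have key : Real.exp (-(lam * j)) * (((n : ℝ) + 1) ^ α) ≤ D * (((r : ℝ) + 1) ^ α) := by
    calc Real.exp (-(lam * j)) * (((n : ℝ) + 1) ^ α)
        ≤ Real.exp (-(lam * j)) * ((((r : ℝ) + 1) * ((j : ℝ) + 1)) ^ α) := by
          have := Real.rpow_le_rpow hx.le hfac hα.le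
          exact mul_le_mul_of_nonneg_left this (Real.exp_pos _).le
      _ = ((r : ℝ) + 1) ^ α * (((j : ℝ) + 1) ^ α * Real.exp (-(lam * j))) := by
          rw [Real.mul_rpow hb.le hjp.le]; ring
      _ ≤ ((r : ℝ) + 1) ^ α * D := by
          exact mul_le_mul_of_nonneg_left (hD j) (Real.rpow_nonneg hb.le _)
      _ = D * (((r : ℝ) + 1) ^ α) := by ring
  have hxa : (0 : ℝ) < ((n : ℝ) + 1) ^ α := Real.rpow_pos_of_pos hx α
  have hba : (0 : ℝ) < ((r : ℝ) + 1) ^ α := Real.rpow_pos_of_pos hb α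
  have key2 : (Real.exp (lam * (j : ℝ)))⁻¹ * (((r : ℝ) + 1) ^ α)⁻¹
      ≤ D * ((((n : ℝ) + 1) ^ α)⁻¹) := by
    rw [← Real.exp_neg, ← div_eq_mul_inv, ← div_eq_mul_inv, div_le_div_iff₀ hba hxa]
    exact key
  have hcast : (((r + 1 : ℕ) : ℝ)) = (r : ℝ) + 1 := by push_cast; ring
  have hnle : ((n : ℝ)) ^ β ≤ ((n : ℝ) + 1) ^ β :=
    Real.rpow_le_rpow (Nat.cast_nonneg n) (by linarith) hβ
  calc ((n : ℝ) ^ β * (Real.exp (lam * ((n - r : ℕ) : ℝ)))⁻¹)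
        * (C * (((r + 1 : ℕ) : ℝ)) ^ (-α))
      = C * ((n : ℝ) ^ β * ((Real.exp (lam * (j : ℝ)))⁻¹ * (((r : ℝ) + 1) ^ α)⁻¹)) := by
        rw [hcast, Real.rpow_neg hb.le]; ring
    _ ≤ C * (((n : ℝ) + 1) ^ β * (D * ((((n : ℝ) + 1) ^ α)⁻¹))) := by
        apply mul_le_mul_of_nonneg_left ?_ hC.le
        apply mul_le_mul hnle key2 ?_ (Real.rpow_nonneg hx.le _)
        positivity
    _ = C * D * (((n : ℝ) + 1) ^ (β - α)) := by
        rw [Real.rpow_sub hx, div_eq_mul_inv]; ring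

end Aux

/-- Polynomial case: if `Leb (Γ_n) ≤ C n^{-α}` with `α > 2` then one gets backward
contraction at a polynomial rate `n^β`. -/
theorem backward_contraction_polynomial {d : ℕ}
    (M : Set (EuclideanSpace ℝ (Fin d))) (hM : IsCompact M)
    (f : EuclideanSpace ℝ (Fin d) → EuclideanSpace ℝ (Fin d))
    (hf : ContDiff ℝ 1 f) (hfM : MapsTo f M M)
    (lam : ℝ) (hlam : 0 < lam)
    (h_expanding : ∀ᵐ x ∂(volume.restrict M),
      ∃ n : ℕ, 1 ≤ n ∧ lam < (1 / n) * Real.log (absDetIter f n x))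
    (C α : ℝ) (hC : 0 < C) (hα : 2 < α)
    (hGamma : ∀ n : ℕ, 1 ≤ n →
      volume (GammaSet M f lam n) ≤ ENNReal.ofReal (C * (n : ℝ) ^ (-α))) :
    ∃ β : ℝ, 0 < β ∧ ∀ᵐ x ∂(volume.restrict M), ∃ Cx : ℝ, 0 < Cx ∧
      ∀ n : ℕ, 1 ≤ n → ∀ y ∈ M, f^[n] y = x →
        Cx * (n : ℝ) ^ β < absDetIter f n y := by
  classical
  set β : ℝ := (α - 2) / 2 with hβdef
  have hβ : 0 < β := by rw [hβdef]; linarith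
  have hp : β + 1 - α < -1 := by rw [hβdef]; linarith
  refine ⟨β, hβ, ?_⟩
  -- the constant D
  obtain ⟨D, hD⟩ : ∃ D : ℝ, ∀ j : ℕ, ((j : ℝ) + 1) ^ α * Real.exp (-(lam * j)) ≤ D := by
    have h0 : Tendsto (fun x : ℝ => x ^ α * Real.exp (-lam * x)) atTop (nhds 0) :=
      tendsto_rpow_mul_exp_neg_mul_atTop_nhds_zero α lam hlam
    have h1 : Tendsto (fun j : ℕ => ((j : ℝ) + 1) ^ α * Real.exp (-lam * ((j : ℝ) + 1)))
        atTop (nhds 0) :=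
      h0.comp (tendsto_atTop_add_const_right atTop 1 tendsto_natCast_atTop_atTop)
    obtain ⟨D', hD'⟩ := h1.bddAbove_range
    refine ⟨Real.exp lam * D', fun j => ?_⟩
    have hj : ((j : ℝ) + 1) ^ α * Real.exp (-lam * ((j : ℝ) + 1)) ≤ D' :=
      hD' (mem_range_self j)
    have hexp : Real.exp (-(lam * j)) = Real.exp lam * Real.exp (-lam * ((j : ℝ) + 1)) := by
      rw [← Real.exp_add]; congr 1; ring
    calc ((j : ℝ) + 1) ^ α * Real.exp (-(lam * j))
        = Real.exp lam * (((j : ℝ) + 1) ^ α * Real.exp (-lam * ((j : ℝ) + 1))) := by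
          rw [hexp]; ring
      _ ≤ Real.exp lam * D' := mul_le_mul_of_nonneg_left hj (Real.exp_pos _).le
  have hD0 : (0 : ℝ) < D := lt_of_lt_of_le (by positivity) (hD 0)
  -- the covering sets
  set A : ℕ → ℕ → Set (EuclideanSpace ℝ (Fin d)) := fun n r => GammaSet M f lam (r + 1) ∩
    {z | Real.exp (lam * ((n - r : ℕ) : ℝ)) * absDetIter f r z ≤ (n : ℝ) ^ β} with hAdef
  set TT : ℕ → Set (EuclideanSpace ℝ (Fin d)) := fun n => ⋃ r ∈ Finset.range (n + 1), f^[r] '' A n r with hTdef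
  have hAmeas : ∀ n r : ℕ, MeasurableSet (A n r) := fun n r =>
    (measurableSet_gammaSet hM.isClosed hf lam (r + 1)).inter
      (isClosed_le (continuous_const.mul (continuous_absDetIter hf r))
        continuous_const).measurableSet
  -- volume bound on each piece
  have hvolA : ∀ n r : ℕ, r ≤ n →
      volume (f^[r] '' A n r) ≤ ENNReal.ofReal (C * D * (((n : ℝ) + 1) ^ (β - α))) := by
    intro n r hr
    have hbnd : ∀ z ∈ A n r, absDetIter f r z
        ≤ (n : ℝ) ^ β * (Real.exp (lam * ((n - r : ℕ) : ℝ)))⁻¹ := by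
      intro z hz
      have h2 := hz.2
      rw [← div_eq_mul_inv, le_div_iff₀ (Real.exp_pos _)]
      calc absDetIter f r z * Real.exp (lam * ((n - r : ℕ) : ℝ))
          = Real.exp (lam * ((n - r : ℕ) : ℝ)) * absDetIter f r z := by ring
        _ ≤ (n : ℝ) ^ β := h2
    calc volume (f^[r] '' A n r)
        ≤ ENNReal.ofReal ((n : ℝ) ^ β * (Real.exp (lam * ((n - r : ℕ) : ℝ)))⁻¹)
            * volume (A n r) := image_volume_le hf r (hAmeas n r) hbnd
      _ ≤ ENNReal.ofReal ((n : ℝ) ^ β * (Real.exp (lam * ((n - r : ℕ) : ℝ)))⁻¹)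
            * ENNReal.ofReal (C * (((r + 1 : ℕ) : ℝ)) ^ (-α)) := by
          apply mul_le_mul_right ?_
          exact le_trans (measure_mono inter_subset_left) (hGamma (r + 1) (by omega))
      _ = ENNReal.ofReal (((n : ℝ) ^ β * (Real.exp (lam * ((n - r : ℕ) : ℝ)))⁻¹)
            * (C * (((r + 1 : ℕ) : ℝ)) ^ (-α))) := by
          rw [← ENNReal.ofReal_mul (by positivity)]
      _ ≤ ENNReal.ofReal (C * D * (((n : ℝ) + 1) ^ (β - α))) :=
          ENNReal.ofReal_le_ofReal
            (real_term_bound hC hD (by linarith) hβ.le hr)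
  -- volume bound on TT n
  have hvolT : ∀ n : ℕ,
      volume (TT n) ≤ ENNReal.ofReal (C * D * (((n : ℝ) + 1) ^ (β + 1 - α))) := by
    intro n
    have hx : (0 : ℝ) < (n : ℝ) + 1 := by positivity
    calc volume (TT n)
        ≤ ∑ r ∈ Finset.range (n + 1), volume (f^[r] '' A n r) :=
          measure_biUnion_finset_le _ _
      _ ≤ ∑ _r ∈ Finset.range (n + 1),
            ENNReal.ofReal (C * D * (((n : ℝ) + 1) ^ (β - α))) :=
          Finset.sum_le_sum fun r hr => hvolA n r (by
            have := Finset.mem_range.mp hr; omega)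
      _ = (n + 1 : ℕ) * ENNReal.ofReal (C * D * (((n : ℝ) + 1) ^ (β - α))) := by
          rw [Finset.sum_const, Finset.card_range, nsmul_eq_mul]
      _ = ENNReal.ofReal (((n + 1 : ℕ) : ℝ) * (C * D * (((n : ℝ) + 1) ^ (β - α)))) := by
          rw [ENNReal.ofReal_mul (by positivity : (0:ℝ) ≤ ((n + 1 : ℕ) : ℝ)),
            ENNReal.ofReal_natCast]
      _ = ENNReal.ofReal (C * D * (((n : ℝ) + 1) ^ (β + 1 - α))) := by
          congr 1
          push_cast
          rw [show β + 1 - α = (β - α) + 1 by ring, Real.rpow_add hx, Real.rpow_one]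
          ring
  -- summability
  have hsum : Summable (fun n : ℕ => C * D * (((n : ℝ) + 1) ^ (β + 1 - α))) := by
    apply Summable.mul_left
    have h1 : Summable (fun n : ℕ => (n : ℝ) ^ (β + 1 - α)) :=
      Real.summable_nat_rpow.mpr hp
    have h2 := (summable_nat_add_iff 1).mpr h1
    exact h2.congr fun n => by push_cast; ring_nf
  have htsum : ∑' n, volume (TT n) ≠ ⊤ := by
    have hle : ∑' n, volume (TT n)
        ≤ ∑' n : ℕ, ENNReal.ofReal (C * D * (((n : ℝ) + 1) ^ (β + 1 - α))) :=
      ENNReal.tsum_le_tsum fun n => hvolT n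
    have heq : ∑' n : ℕ, ENNReal.ofReal (C * D * (((n : ℝ) + 1) ^ (β + 1 - α)))
        = ENNReal.ofReal (∑' n : ℕ, C * D * (((n : ℝ) + 1) ^ (β + 1 - α))) :=
      (ENNReal.ofReal_tsum_of_nonneg (fun n => by positivity) hsum).symm
    exact (hle.trans_lt (heq ▸ ENNReal.ofReal_lt_top)).ne
  -- Borel-Cantelli
  have hBC : ∀ᵐ x ∂(volume : Measure (EuclideanSpace ℝ (Fin d))), {n : ℕ | x ∈ TT n}.Finite :=
    MeasureTheory.ae_finite_setOf_mem htsum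
  -- critical values form a null set
  set Nul : Set (EuclideanSpace ℝ (Fin d)) := ⋃ n : ℕ, f^[n] '' (M ∩ {z | absDetIter f n z = 0}) with hNuldef
  have hNulmeas : ∀ n : ℕ, MeasurableSet (M ∩ {z | absDetIter f n z = 0}) := fun n =>
    hM.isClosed.measurableSet.inter
      (isClosed_eq (continuous_absDetIter hf n) continuous_const).measurableSet
  have hNul : volume Nul = 0 := by
    apply measure_iUnion_null
    intro n
    have h1 := image_volume_le (T := 0) hf n (hNulmeas n) fun z hz => le_of_eq hz.2
    simpa using h1
  have hNul' : ∀ᵐ x ∂(volume : Measure (EuclideanSpace ℝ (Fin d))), x ∉ Nul := by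
    rw [ae_iff]
    simpa [not_not] using hNul
  -- the covering claim
  have hcover : ∀ (x : EuclideanSpace ℝ (Fin d)) (n : ℕ), ∀ y ∈ M, f^[n] y = x →
      absDetIter f n y ≤ (n : ℝ) ^ β → x ∈ TT n := by
    intro x n y hy hxy hdet
    obtain ⟨r, hrn, hΓ, hbd⟩ := decomp (lam := lam) hf hfM n y hy
    have hzM : f^[n - r] y ∈ M := hfM.iterate (n - r) hy
    have hzA : f^[n - r] y ∈ A n r := by
      refine ⟨⟨hzM, ?_⟩, hbd.trans hdet⟩
      have : ((r + 1 : ℕ) : ℕ∞) = (r : ℕ∞) + 1 := by push_cast; rfl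
      rw [this]
      exact hΓ
    have hx : x ∈ f^[r] '' A n r := by
      refine ⟨f^[n - r] y, hzA, ?_⟩
      rw [← Function.iterate_add_apply, show r + (n - r) = n by omega]
      exact hxy
    exact Set.mem_biUnion (Finset.mem_range.mpr (by omega)) hx
  -- conclusion
  apply ae_restrict_of_ae
  filter_upwards [hNul', hBC] with x hx1 hx2
  obtain ⟨N, hN⟩ : ∃ N : ℕ, ∀ n : ℕ, N ≤ n → x ∉ TT n := by
    obtain ⟨B, hB⟩ := hx2.bddAbove
    exact ⟨B + 1, fun n hn hmem => by have := hB hmem; omega⟩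
  have hfiber : ∀ n : ℕ, ∀ y ∈ M, f^[n] y = x → 0 < absDetIter f n y := by
    intro n y hy hxy
    rcases (absDetIter_nonneg n y).lt_or_eq with h | h
    · exact h
    · refine absurd ?_ hx1
      rw [hNuldef]
      exact mem_iUnion.mpr ⟨n, ⟨y, ⟨hy, h.symm⟩, hxy⟩⟩
  have Hc : ∀ n : ℕ, 1 ≤ n → ∃ c : ℝ, 0 < c ∧
      ∀ y ∈ M, f^[n] y = x → c * (n : ℝ) ^ β < absDetIter f n y := by
    intro n hn
    have hnβ : (0 : ℝ) < (n : ℝ) ^ β :=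
      Real.rpow_pos_of_pos (by exact_mod_cast hn) β
    by_cases hne : (M ∩ f^[n] ⁻¹' {x}).Nonempty
    · have hK : IsCompact (M ∩ f^[n] ⁻¹' {x}) :=
        hM.inter_right (isClosed_singleton.preimage (contDiff_iterate hf n).continuous)
      obtain ⟨y0, hy0K, hy0min⟩ :=
        hK.exists_isMinOn hne ((continuous_absDetIter hf n).continuousOn)
      have h0 : 0 < absDetIter f n y0 :=
        hfiber n y0 hy0K.1 (by simpa using hy0K.2)
      refine ⟨absDetIter f n y0 / (2 * (n : ℝ) ^ β), by positivity, ?_⟩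
      intro y hy hxy
      have hyK : y ∈ M ∩ f^[n] ⁻¹' {x} := ⟨hy, by simpa using hxy⟩
      have hmin : absDetIter f n y0 ≤ absDetIter f n y := hy0min hyK
      calc absDetIter f n y0 / (2 * (n : ℝ) ^ β) * (n : ℝ) ^ β
          = absDetIter f n y0 / 2 := by field_simp
        _ < absDetIter f n y0 := by linarith
        _ ≤ absDetIter f n y := hmin
    · exact ⟨1, one_pos, fun y hy hxy => absurd ⟨y, hy, by simpa using hxy⟩ hne⟩
  set g : ℕ → ℝ := fun n => if h : 1 ≤ n then min 1 (Hc n h).choose else 1 with hgdef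
  have hg0 : ∀ n, 0 < g n := by
    intro n
    by_cases h : 1 ≤ n
    · simp only [hgdef, h, dif_pos]
      exact lt_min one_pos (Hc n h).choose_spec.1
    · simp [hgdef, h]
  have hg1 : ∀ n, g n ≤ 1 := by
    intro n
    by_cases h : 1 ≤ n
    · simp only [hgdef, h, dif_pos]
      exact min_le_left _ _
    · simp [hgdef, h]
  set P : ℝ := ∏ n ∈ Finset.range N, g n with hPdef
  have hP0 : 0 < P := Finset.prod_pos fun n _ => hg0 n
  have hP1 : P ≤ 1 := Finset.prod_le_one (fun n _ => (hg0 n).le) (fun n _ => hg1 n)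
  refine ⟨P / 2, by positivity, ?_⟩
  intro n hn y hy hxy
  have hnβ : (0 : ℝ) < (n : ℝ) ^ β :=
    Real.rpow_pos_of_pos (by exact_mod_cast hn) β
  by_cases hcase : N ≤ n
  · have hxt := hN n hcase
    have hdet : (n : ℝ) ^ β < absDetIter f n y := by
      by_contra hcon
      push_neg at hcon
      exact hxt (hcover x n y hy hxy hcon)
    calc P / 2 * (n : ℝ) ^ β ≤ 1 / 2 * (n : ℝ) ^ β := by
          apply mul_le_mul_of_nonneg_right (by linarith) hnβ.le
      _ < (n : ℝ) ^ β := by linarith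
      _ < absDetIter f n y := hdet
  · have hnN : n ∈ Finset.range N := Finset.mem_range.mpr (by omega)
    have hPle : P ≤ g n := by
      rw [hPdef, ← Finset.mul_prod_erase _ _ hnN]
      have hrest : ∏ m ∈ (Finset.range N).erase n, g m ≤ 1 :=
        Finset.prod_le_one (fun _ _ => (hg0 _).le) (fun _ _ => hg1 _)
      nlinarith [hg0 n, Finset.prod_pos (fun m (_ : m ∈ (Finset.range N).erase n) => hg0 m)]
    have hgc : g n ≤ (Hc n hn).choose := by
      simp only [hgdef, hn, dif_pos]
      exact min_le_right _ _
    have hc := (Hc n hn).choose_spec.2 y hy hxy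
    calc P / 2 * (n : ℝ) ^ β < (Hc n hn).choose * (n : ℝ) ^ β := by
          apply mul_lt_mul_of_pos_right ?_ hnβ
          have : P / 2 < P := by linarith
          linarith [hPle.trans hgc]
      _ < absDetIter f n y := hc
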